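/- arXiv:1101.1681 — 5 statements merged into one kernel-verified Lean document; each statement's English description precedes it below -/
import Mathlib

section
/- Let a, b : ℝ → ℝ be continuous ω-periodic functions with positive averages A_ω(a) = (1/ω)∫₀^ω a(t)dt > 0 and A_ω(b) > 0, and with b(t) > 0. Then the scalar logistic equation v' = v(a(t) - b(t)v) has a positive ω-periodic solution v* given explicitly by v*(t) = exp(∫₀^t a(s)ds) · [∫₀^t b(s)exp(∫₀^s a(ν)dν)ds + c*]⁻¹ for a suitable constant c* > 0. -/
open Real Filter intervalIntegral

/-- Existence of a positive ω-periodic solution of the scalar logistic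
equation, given by the explicit formula. -/
theorem logistic_periodic_solution_exists
    (ω : ℝ) (hω : 0 < ω)
    (a b : ℝ → ℝ) (ha : Continuous a) (hb : Continuous b)
    (haper : ∀ t, a (t + ω) = a t) (hbper : ∀ t, b (t + ω) = b t)
    (hbpos : ∀ t, 0 < b t)
    (havg_a : 0 < (1 / ω) * ∫ t in (0:ℝ)..ω, a t)
    (havg_b : 0 < (1 / ω) * ∫ t in (0:ℝ)..ω, b t) :
    ∃ cstar : ℝ, 0 < cstar ∧
      (let vstar : ℝ → ℝ := fun t =>
        Real.exp (∫ s in (0:ℝ)..t, a s) *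
          ((∫ s in (0:ℝ)..t, b s * Real.exp (∫ ν in (0:ℝ)..s, a ν)) + cstar)⁻¹
      (∀ t, 0 < vstar t) ∧ (∀ t, vstar (t + ω) = vstar t) ∧
        ∀ t, HasDerivAt vstar (vstar t * (a t - b t * vstar t)) t) := by
  set A : ℝ → ℝ := fun t => ∫ s in (0:ℝ)..t, a s with hAdef
  set g : ℝ → ℝ := fun s => b s * Real.exp (A s) with hgdef
  set B : ℝ → ℝ := fun t => ∫ s in (0:ℝ)..t, g s with hBdef
  have hAc : Continuous A :=
    intervalIntegral.continuous_primitive (fun x y => ha.intervalIntegrable x y) 0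
  have hgc : Continuous g := hb.mul hAc.rexp
  have hgpos : ∀ s, 0 < g s := fun s => mul_pos (hbpos s) (Real.exp_pos _)
  -- additivity of A
  have hAadd : ∀ t, A (t + ω) = A t + A ω := by
    intro t
    have h1 : (∫ s in (0:ℝ)..ω, a s) + (∫ s in ω..(t+ω), a s) = ∫ s in (0:ℝ)..(t+ω), a s :=
      integral_add_adjacent_intervals (ha.intervalIntegrable _ _) (ha.intervalIntegrable _ _)
    have h2 : (∫ s in ω..(t+ω), a s) = ∫ s in (0:ℝ)..t, a s := by
      have h := integral_comp_add_right (a := 0) (b := t) (fun s => a s) ω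
      simp only [haper, zero_add] at h
      rw [← h]
    simp only [hAdef]
    rw [← h1, h2]; ring
  have hAωpos : 0 < A ω := by
    have := havg_a
    by_contra h
    push_neg at h
    nlinarith [mul_nonpos_of_nonneg_of_nonpos (le_of_lt (one_div_pos.mpr hω)) h]
  set k : ℝ := Real.exp (A ω) with hkdef
  have hk1 : 1 < k := by
    rw [hkdef, show (1:ℝ) = Real.exp 0 by simp]
    exact Real.exp_lt_exp.mpr hAωpos
  have hkpos : 0 < k := lt_trans one_pos hk1
  -- B functional equation
  have hBadd : ∀ t, B (t + ω) = B ω + k * B t := by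
    intro t
    have h1 : (∫ s in (0:ℝ)..ω, g s) + (∫ s in ω..(t+ω), g s) = ∫ s in (0:ℝ)..(t+ω), g s :=
      integral_add_adjacent_intervals (hgc.intervalIntegrable _ _) (hgc.intervalIntegrable _ _)
    have hgper : ∀ s, g (s + ω) = k * g s := by
      intro s
      simp only [hgdef, hbper, hAadd, Real.exp_add, hkdef]
      ring
    have h2 : (∫ s in ω..(t+ω), g s) = k * ∫ s in (0:ℝ)..t, g s := by
      have h := integral_comp_add_right (a := 0) (b := t) (fun s => g s) ω
      simp only [hgper, zero_add] at h
      rw [← h, intervalIntegral.integral_const_mul]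
    simp only [hBdef]
    rw [← h1, h2]
  have hBωpos : 0 < B ω :=
    intervalIntegral_pos_of_pos_on (hgc.intervalIntegrable _ _) (fun x _ => hgpos x) hω
  -- the constant
  refine ⟨B ω / (k - 1), div_pos hBωpos (by linarith), ?_⟩
  set c : ℝ := B ω / (k - 1) with hcdef
  have hcpos : 0 < c := div_pos hBωpos (by linarith)
  set G : ℝ → ℝ := fun t => B t + c with hGdef
  have hGmul : ∀ t, G (t + ω) = k * G t := by
    intro t
    have hk : k - 1 ≠ 0 := by linarith
    simp only [hGdef, hBadd t, hcdef]
    field_simp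
    ring
  -- positivity of G
  have hGnonneg0 : ∀ t, 0 ≤ t → 0 < G t := by
    intro t ht
    have : 0 ≤ B t := intervalIntegral.integral_nonneg ht (fun x _ => le_of_lt (hgpos x))
    simp only [hGdef]; linarith
  have hGiter : ∀ (n : ℕ) (t : ℝ), G (t + n * ω) = k ^ n * G t := by
    intro n
    induction n with
    | zero => intro t; simp
    | succ m ih =>
      intro t
      have : t + (m + 1 : ℕ) * ω = (t + m * ω) + ω := by push_cast; ring
      rw [this, hGmul, ih]
      ring
  have hGpos : ∀ t, 0 < G t := by
    intro t
    obtain ⟨n, hn⟩ := exists_nat_ge (-t / ω)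
    have ht' : 0 ≤ t + n * ω := by
      have := (div_le_iff₀ hω).mp hn
      linarith
    have h1 : 0 < G (t + n * ω) := hGnonneg0 _ ht'
    rw [hGiter n t] at h1
    have hkn : 0 < (k:ℝ) ^ n := pow_pos hkpos n
    by_contra h
    push_neg at h
    nlinarith
  intro vstar
  have hvs : ∀ t, vstar t = Real.exp (A t) * (G t)⁻¹ := fun t => rfl
  have hkne : k ≠ 0 := ne_of_gt hkpos
  refine ⟨fun t => mul_pos (Real.exp_pos _) (inv_pos.mpr (hGpos t)), ?_, ?_⟩
  · intro t
    rw [hvs, hvs, hAadd, hGmul, Real.exp_add, mul_inv, ← hkdef,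
      mul_assoc, ← mul_assoc k, mul_inv_cancel₀ hkne, one_mul]
  · intro t
    have hAderiv : HasDerivAt A (a t) t :=
      integral_hasDerivAt_right (ha.intervalIntegrable _ _)
        (ha.stronglyMeasurableAtFilter _ _) ha.continuousAt
    have hBderiv : HasDerivAt B (g t) t :=
      integral_hasDerivAt_right (hgc.intervalIntegrable _ _)
        (hgc.stronglyMeasurableAtFilter _ _) hgc.continuousAt
    have hGderiv : HasDerivAt G (g t) t := by
      exact hBderiv.add_const c
    have hGne : G t ≠ 0 := ne_of_gt (hGpos t)
    have h1 : HasDerivAt (fun u => Real.exp (A u)) (a t * Real.exp (A t)) t := by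
      simpa [mul_comm] using hAderiv.exp
    have h2 : HasDerivAt (fun u => (G u)⁻¹) (-(g t) / (G t) ^ 2) t := hGderiv.inv hGne
    have h3 := h1.mul h2
    have key : vstar t * (a t - b t * vstar t)
        = a t * Real.exp (A t) * (G t)⁻¹ + Real.exp (A t) * (-(g t) / (G t) ^ 2) := by
      rw [hvs t]
      simp only [hgdef]
      field_simp
      ring
    rw [key]
    exact h3
end

section
/- Let a, b : ℝ → ℝ be continuous ω-periodic with b(t) > 0 and A_ω(b) > 0. If v* is the positive ω-periodic solution of v' = v(a(t) - b(t)v) and v is any other positive solution, then |v(t) - v*(t)| → 0 as t → ∞; i.e., v* is globally asymptotically attractive among positive solutions. -/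
open Real Filter

/-- Global asymptotic attractivity of the positive ω-periodic solution of the
logistic equation among positive solutions. -/
theorem logistic_periodic_solution_globally_attractive
    (ω t₀ : ℝ) (hω : 0 < ω)
    (a b : ℝ → ℝ) (ha : Continuous a) (hb : Continuous b)
    (haper : ∀ t, a (t + ω) = a t) (hbper : ∀ t, b (t + ω) = b t)
    (hbpos : ∀ t, 0 < b t)
    (havg_b : 0 < (1 / ω) * ∫ t in (0:ℝ)..ω, b t)
    (vstar : ℝ → ℝ)
    (hvstar_pos : ∀ t, 0 < vstar t)
    (hvstar_per : ∀ t, vstar (t + ω) = vstar t)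
    (hvstar_sol : ∀ t, HasDerivAt vstar (vstar t * (a t - b t * vstar t)) t)
    (v : ℝ → ℝ)
    (hv_pos : ∀ t, t₀ ≤ t → 0 < v t)
    (hv_sol : ∀ t, t₀ ≤ t → HasDerivAt v (v t * (a t - b t * v t)) t) :
    Tendsto (fun t => |v t - vstar t|) atTop (nhds 0) := by
  -- continuity and periodicity facts
  have hvc : Continuous vstar := by
    rw [continuous_iff_continuousAt]
    exact fun t => (hvstar_sol t).continuousAt
  have hper : Function.Periodic vstar ω := hvstar_per
  have haP : Function.Periodic a ω := haper
  -- upper bound M for vstar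
  obtain ⟨tM, htMmem, hM⟩ := (isCompact_Icc (a := (0:ℝ)) (b := ω)).exists_isMaxOn
    ⟨0, le_refl 0, hω.le⟩ hvc.continuousOn
  set M := vstar tM with hMdef
  have hMpos : 0 < M := hvstar_pos tM
  have hvstar_le : ∀ t, vstar t ≤ M := by
    intro t
    obtain ⟨y, hy, hyeq⟩ := hper.exists_mem_Ico₀ hω t
    rw [hyeq]
    exact hM ⟨hy.1, hy.2.le⟩
  -- the antiderivative A of a starting at t₀
  have hAint : ∀ x y : ℝ, IntervalIntegrable a MeasureTheory.volume x y :=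
    fun x y => ha.intervalIntegrable x y
  set A : ℝ → ℝ := fun t => ∫ s in t₀..t, a s with hAdef
  have hA : ∀ t, HasDerivAt A (a t) t := fun t =>
    intervalIntegral.integral_hasDerivAt_right (hAint t₀ t)
      (ha.stronglyMeasurableAtFilter _ _) ha.continuousAt
  have hAcont : Continuous A := by
    rw [continuous_iff_continuousAt]
    exact fun t => (hA t).continuousAt
  have hA0 : A t₀ = 0 := intervalIntegral.integral_same
  -- reciprocals
  set w : ℝ → ℝ := fun t => (v t)⁻¹ with hwdef
  set ws : ℝ → ℝ := fun t => (vstar t)⁻¹ with hwsdef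
  have hws_deriv : ∀ t, HasDerivAt ws (b t - a t * ws t) t := by
    intro t
    have hne : vstar t ≠ 0 := (hvstar_pos t).ne'
    have h := (hvstar_sol t).inv hne
    refine h.congr_deriv ?_
    simp only [hwsdef]
    field_simp
    ring
  have hw_deriv : ∀ t, t₀ ≤ t → HasDerivAt w (b t - a t * w t) t := by
    intro t ht
    have hne : v t ≠ 0 := (hv_pos t ht).ne'
    have h := (hv_sol t ht).inv hne
    refine h.congr_deriv ?_
    simp only [hwdef]
    field_simp
    ring
  -- g = (w - ws) * exp A is constant on [t₀, ∞)
  set g : ℝ → ℝ := fun t => (w t - ws t) * Real.exp (A t) with hgdef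
  have hg : ∀ t, t₀ ≤ t → HasDerivAt g 0 t := by
    intro t ht
    have h1 : HasDerivAt (fun s => w s - ws s)
        ((b t - a t * w t) - (b t - a t * ws t)) t := (hw_deriv t ht).sub (hws_deriv t)
    have h2 : HasDerivAt (fun s => Real.exp (A s)) (Real.exp (A t) * a t) t := (hA t).exp
    have h3 := h1.mul h2
    refine h3.congr_deriv ?_
    ring
  have hgconst : ∀ t, t₀ ≤ t → g t = g t₀ := by
    intro t ht
    have hcont : ContinuousOn g (Set.Icc t₀ t) :=
      fun x hx => ((hg x hx.1).continuousAt).continuousWithinAt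
    have hderiv : ∀ x ∈ Set.Ico t₀ t, HasDerivWithinAt g 0 (Set.Ici x) x :=
      fun x hx => (hg x hx.1).hasDerivWithinAt
    exact constant_of_has_deriv_right_zero hcont hderiv t ⟨ht, le_refl t⟩
  set c : ℝ := w t₀ - ws t₀ with hcdef
  have hgt0 : g t₀ = c := by
    simp [hgdef, hA0, hcdef]
  have hkey : ∀ t, t₀ ≤ t → w t - ws t = c * Real.exp (-(A t)) := by
    intro t ht
    have h := (hgconst t ht).trans hgt0
    have hne : Real.exp (A t) ≠ 0 := (Real.exp_pos _).ne'
    rw [hgdef] at h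
    simp only at h
    rw [Real.exp_neg]
    field_simp
    linarith [h]
  -- pointwise identity for |v - vstar|
  have hdiff : ∀ t, t₀ ≤ t →
      |v t - vstar t| = |c| * Real.exp (-(A t)) * (v t * vstar t) := by
    intro t ht
    have hv0 : v t ≠ 0 := (hv_pos t ht).ne'
    have hvs0 : vstar t ≠ 0 := (hvstar_pos t).ne'
    have e1 : (vstar t)⁻¹ * (v t * vstar t) = v t := by field_simp
    have e2 : (v t)⁻¹ * (v t * vstar t) = vstar t := by
      field_simp
    have hid : v t - vstar t = (ws t - w t) * (v t * vstar t) := by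
      simp only [hwdef, hwsdef, sub_mul, e1, e2]
    rw [hid]
    have : ws t - w t = -(c * Real.exp (-(A t))) := by
      have := hkey t ht; linarith
    rw [this, abs_mul, abs_neg, abs_mul, abs_of_pos (Real.exp_pos _),
      abs_of_pos (mul_pos (hv_pos t ht) (hvstar_pos t))]
  -- ∫₀^ω a > 0
  have hlog : ∀ t, HasDerivAt (fun s => Real.log (vstar s)) (a t - b t * vstar t) t := by
    intro t
    have hne : vstar t ≠ 0 := (hvstar_pos t).ne'
    have h := (hvstar_sol t).log hne
    convert h using 1
    field_simp
  have hintsub : IntervalIntegrable (fun s => a s - b s * vstar s) MeasureTheory.volume 0 ω :=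
    (ha.sub (hb.mul hvc)).intervalIntegrable 0 ω
  have h0 : ∫ s in (0:ℝ)..ω, (a s - b s * vstar s) = 0 := by
    rw [intervalIntegral.integral_eq_sub_of_hasDerivAt (fun x _ => hlog x) hintsub]
    have hp := hvstar_per 0
    rw [zero_add] at hp
    rw [hp, sub_self]
  have hIa : 0 < ∫ s in (0:ℝ)..ω, a s := by
    have hsplit : (∫ s in (0:ℝ)..ω, (a s - b s * vstar s))
        = (∫ s in (0:ℝ)..ω, a s) - ∫ s in (0:ℝ)..ω, b s * vstar s :=
      intervalIntegral.integral_sub (hAint 0 ω) ((hb.mul hvc).intervalIntegrable 0 ω)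
    have hposint : 0 < ∫ s in (0:ℝ)..ω, b s * vstar s :=
      intervalIntegral.intervalIntegral_pos_of_pos_on ((hb.mul hvc).intervalIntegrable 0 ω)
        (fun x _ => mul_pos (hbpos x) (hvstar_pos x)) hω
    rw [hsplit] at h0
    linarith
  set Ia : ℝ := ∫ s in (0:ℝ)..ω, a s with hIadef
  -- A(t+ω) = A(t) + Ia
  have hAadd : ∀ t, A (t + ω) = A t + Ia := by
    intro t
    have h1 : A t + ∫ s in t..t + ω, a s = A (t + ω) :=
      intervalIntegral.integral_add_adjacent_intervals (hAint t₀ t) (hAint t (t + ω))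
    have h2 : (∫ s in t..t + ω, a s) = ∫ s in (0:ℝ)..0 + ω, a s :=
      haP.intervalIntegral_add_eq t 0
    rw [zero_add] at h2
    rw [← h1, h2]
  -- A(t) ≥ linear function, so A → ∞
  set h : ℝ → ℝ := fun t => A t - (Ia / ω) * t with hhdef
  have hhper : Function.Periodic h ω := by
    intro t
    have hm : Ia / ω * ω = Ia := div_mul_cancel₀ Ia hω.ne'
    simp only [hhdef, hAadd t, mul_add]
    linarith
  have hhcont : Continuous h := hAcont.sub (continuous_const.mul continuous_id)
  obtain ⟨th, _, hth⟩ := (isCompact_Icc (a := (0:ℝ)) (b := ω)).exists_isMinOn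
    ⟨0, le_refl 0, hω.le⟩ hhcont.continuousOn
  have hhlb : ∀ t, h th ≤ h t := by
    intro t
    obtain ⟨y, hy, hyeq⟩ := hhper.exists_mem_Ico₀ hω t
    rw [hyeq]
    exact hth ⟨hy.1, hy.2.le⟩
  have hAatTop : Tendsto A atTop atTop := by
    have hlin : Tendsto (fun t => (Ia / ω) * t + h th) atTop atTop := by
      apply tendsto_atTop_add_const_right
      exact Tendsto.const_mul_atTop (div_pos hIa hω) tendsto_id
    apply tendsto_atTop_mono _ hlin
    intro t
    have := hhlb t
    simp only [hhdef] at this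
    linarith
  have hexp0 : Tendsto (fun t => Real.exp (-(A t))) atTop (nhds 0) :=
    Real.tendsto_exp_atBot.comp (tendsto_neg_atTop_atBot.comp hAatTop)
  -- eventual bound: v t ≤ 2M
  have hvbound : ∀ᶠ t in atTop, v t ≤ 2 * M := by
    have hε : (0:ℝ) < 1 / (2 * M * (|c| + 1)) := by positivity
    have h1 : ∀ᶠ t in atTop, Real.exp (-(A t)) < 1 / (2 * M * (|c| + 1)) :=
      hexp0.eventually (eventually_lt_nhds hε)
    filter_upwards [h1, eventually_ge_atTop t₀] with t hlt ht
    have hc_small : |c| * Real.exp (-(A t)) ≤ 1 / (2 * M) := by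
      have h2 : |c| * Real.exp (-(A t)) ≤ |c| * (1 / (2 * M * (|c| + 1))) :=
        mul_le_mul_of_nonneg_left hlt.le (abs_nonneg c)
      have h3 : |c| * (1 / (2 * M * (|c| + 1))) ≤ 1 / (2 * M) := by
        rw [mul_one_div, div_le_div_iff₀ (by positivity) (by positivity)]
        nlinarith [abs_nonneg c]
      linarith
    have hwst : (1:ℝ) / M ≤ ws t := by
      simp only [hwsdef]
      rw [div_le_iff₀ hMpos, inv_mul_eq_div, le_div_iff₀ (hvstar_pos t)]
      simpa using hvstar_le t
    have hwlb : 1 / (2 * M) ≤ w t := by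
      have hk := hkey t ht
      have : -(|c| * Real.exp (-(A t))) ≤ c * Real.exp (-(A t)) := by
        have := neg_abs_le (c * Real.exp (-(A t)))
        rw [abs_mul, abs_of_pos (Real.exp_pos _)] at this
        linarith
      have h1M : (1:ℝ) / M - 1 / (2 * M) = 1 / (2 * M) := by
        field_simp; ring
      nlinarith
    have hvpos := hv_pos t ht
    rw [hwdef] at hwlb
    simp only at hwlb
    have h4 : ((v t)⁻¹)⁻¹ ≤ (1 / (2 * M))⁻¹ := inv_anti₀ (by positivity) hwlb
    rw [inv_inv, one_div, inv_inv] at h4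
    exact h4
  -- final squeeze
  have hbound : ∀ᶠ t in atTop, |v t - vstar t| ≤ (|c| * (2 * M * M)) * Real.exp (-(A t)) := by
    filter_upwards [hvbound, eventually_ge_atTop t₀] with t hv2M ht
    rw [hdiff t ht]
    have h1 : v t * vstar t ≤ 2 * M * M :=
      mul_le_mul hv2M (hvstar_le t) (hvstar_pos t).le (by positivity)
    have h2 : 0 ≤ |c| * Real.exp (-(A t)) := by positivity
    nlinarith [Real.exp_pos (-(A t)), abs_nonneg c]
  have hRHS : Tendsto (fun t => (|c| * (2 * M * M)) * Real.exp (-(A t))) atTop (nhds 0) := by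
    have := hexp0.const_mul (|c| * (2 * M * M))
    simpa using this
  exact squeeze_zero' (Eventually.of_forall fun t => abs_nonneg _) hbound hRHS
end

section
/- Let W(t) = |ln v(t) - ln v*(t)| where v and v* are two positive solutions of v' = v(a(t) - b(t)v). Then the upper right Dini derivative of W along solutions satisfies D⁺W(t) = -b(t)|v(t) - v*(t)| ≤ 0. -/
open Real Filter

/-- The upper right Dini derivative. -/
noncomputable def diniUpper (f : ℝ → ℝ) (t : ℝ) : ℝ :=
  Filter.limsup (fun h : ℝ => (f (t + h) - f t) / h) (nhdsWithin 0 (Set.Ioi 0))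

lemma diniUpper_eq_of_hasDerivAt {f : ℝ → ℝ} {f' t : ℝ}
    (hf : HasDerivAt f f' t) : diniUpper f t = f' := by
  have hslope : Filter.Tendsto (slope f t) (nhdsWithin t (Set.Ioi t \ {t})) (nhds f') :=
    hasDerivWithinAt_iff_tendsto_slope.1 (hf.hasDerivWithinAt (s := Set.Ioi t))
  have hmap : Filter.Tendsto (fun h : ℝ => t + h) (nhdsWithin 0 (Set.Ioi 0))
      (nhdsWithin t (Set.Ioi t \ {t})) := by
    apply tendsto_nhdsWithin_of_tendsto_nhds_of_eventually_within
    · have : Filter.Tendsto (fun h : ℝ => t + h) (nhds 0) (nhds t) := by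
        simpa using (continuous_add_left t).tendsto (0 : ℝ)
      exact this.mono_left nhdsWithin_le_nhds
    · filter_upwards [self_mem_nhdsWithin] with h hh
      exact ⟨by simpa using hh, by simp; linarith [Set.mem_Ioi.1 hh]⟩
  have htend : Filter.Tendsto (fun h : ℝ => (f (t + h) - f t) / h)
      (nhdsWithin 0 (Set.Ioi 0)) (nhds f') := by
    refine (hslope.comp hmap).congr fun h => ?_
    simp [slope, Function.comp, div_eq_inv_mul]
  exact htend.limsup_eq

/-- Along two positive solutions of the logistic equation, the Lyapunov
function W(t) = |ln v(t) - ln v*(t)| has Dini derivative -b(t)|v(t)-v*(t)| ≤ 0. -/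
theorem lyapunov_dini_derivative
    (a b : ℝ → ℝ) (ha : Continuous a) (hb : Continuous b)
    (hbpos : ∀ t, 0 < b t)
    (v vstar : ℝ → ℝ)
    (hv_pos : ∀ t, 0 < v t) (hvstar_pos : ∀ t, 0 < vstar t)
    (hv_sol : ∀ t, HasDerivAt v (v t * (a t - b t * v t)) t)
    (hvstar_sol : ∀ t, HasDerivAt vstar (vstar t * (a t - b t * vstar t)) t) :
    ∀ t, diniUpper (fun s => |Real.log (v s) - Real.log (vstar s)|) t
          = -(b t) * |v t - vstar t| ∧
        diniUpper (fun s => |Real.log (v s) - Real.log (vstar s)|) t ≤ 0 := by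
  intro t
  set g : ℝ → ℝ := fun s => Real.log (v s) - Real.log (vstar s) with hgdef
  have hg : ∀ s, HasDerivAt g (-(b s) * (v s - vstar s)) s := by
    intro s
    have h1 := (hv_sol s).log (hv_pos s).ne'
    have h2 := (hvstar_sol s).log (hvstar_pos s).ne'
    have h3 := h1.sub h2
    refine h3.congr_deriv ?_
    have hv0 := (hv_pos s).ne'
    have hv1 := (hvstar_pos s).ne'
    field_simp
    ring
  have key : HasDerivAt (fun s => |g s|) (-(b t) * |v t - vstar t|) t := by
    rcases lt_trichotomy (v t) (vstar t) with hlt | heq | hgt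
    · have hgt0 : g t < 0 := sub_neg.mpr (Real.log_lt_log (hv_pos t) hlt)
      have hcont : ContinuousAt g t := (hg t).continuousAt
      have hev : (fun s => |g s|) =ᶠ[nhds t] (fun s => -g s) := by
        filter_upwards [hcont (Iio_mem_nhds hgt0)] with s hs
        exact abs_of_neg hs
      have hd := (hg t).neg
      have : HasDerivAt (fun s => |g s|) (-(-(b t) * (v t - vstar t))) t :=
        hd.congr_of_eventuallyEq hev
      convert this using 1
      rw [abs_of_neg (by linarith : v t - vstar t < 0)]
      ring
    · have hg0 : g t = 0 := by simp [hgdef, heq]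
      have h0 : HasDerivAt g 0 t := by
        have := hg t
        rw [heq] at this
        simpa using this
      have hval : -(b t) * |v t - vstar t| = 0 := by simp [heq]
      rw [hval]
      rw [hasDerivAt_iff_tendsto] at h0 ⊢
      refine h0.congr fun x => ?_
      simp [hg0, abs_abs]
    · have hgt0 : 0 < g t := sub_pos.mpr (Real.log_lt_log (hvstar_pos t) hgt)
      have hcont : ContinuousAt g t := (hg t).continuousAt
      have hev : (fun s => |g s|) =ᶠ[nhds t] g := by
        filter_upwards [hcont (Ioi_mem_nhds hgt0)] with s hs
        exact abs_of_pos hs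
      have : HasDerivAt (fun s => |g s|) (-(b t) * (v t - vstar t)) t :=
        (hg t).congr_of_eventuallyEq hev
      convert this using 2
      exact abs_of_pos (by linarith)
  refine ⟨diniUpper_eq_of_hasDerivAt key, ?_⟩
  rw [diniUpper_eq_of_hasDerivAt key]
  exact mul_nonpos_of_nonpos_of_nonneg (by linarith [hbpos t]) (abs_nonneg _)
end

section
/- Suppose for the Owen-Smith system the averaged net growth condition fails: A_ω(-R + α(v* - ρ)/(β + v*) - γβ/(v* - ρ)) ≤ 0, where v* is the positive ω-periodic solution of the logistic equation v' = v(a - bv). Then every positive solution satisfies h(t) → 0 as t → ∞, i.e., the herbivore goes extinct, and in particular the system is not permanent. -/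
open Real Filter

/-- A positive solution of the Owen-Smith system. -/
def OwenSmithSolution (a b c α β γ ρ R : ℝ → ℝ) (v h : ℝ → ℝ) : Prop :=
  (∀ t, HasDerivAt v
    (v t * (a t - b t * v t) - c t * ((v t - ρ t) / (β t + v t)) * h t) t) ∧
  (∀ t, HasDerivAt h
    (h t * (α t * (v t - ρ t) / (β t + v t) - R t
      - γ t * (β t + v t) / (v t - ρ t))) t) ∧
  (∀ t, ρ t < v t) ∧ (∀ t, 0 < h t)

/-- Permanence of the Owen-Smith system. -/
def OwenSmithPermanent (a b c α β γ ρ R : ℝ → ℝ) : Prop :=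
  ∃ δ Δ : ℝ, 0 < δ ∧ δ < Δ ∧ ∀ v h : ℝ → ℝ,
    OwenSmithSolution a b c α β γ ρ R v h →
      δ ≤ liminf v atTop ∧ δ ≤ liminf h atTop ∧
      limsup v atTop ≤ Δ ∧ limsup h atTop ≤ Δ


lemma periodic_max {ω : ℝ} (hω : 0 < ω) {f : ℝ → ℝ} (hf : Continuous f)
    (hper : Function.Periodic f ω) : ∃ z : ℝ, ∀ t, f t ≤ f z := by
  obtain ⟨z, _, hmax⟩ := (isCompact_Icc (a := (0:ℝ)) (b := ω)).exists_isMaxOn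
    ⟨0, le_refl _, hω.le⟩ hf.continuousOn
  refine ⟨z, fun t => ?_⟩
  obtain ⟨y, hy, hfy⟩ := hper.exists_mem_Ico₀ hω t
  rw [hfy]
  exact hmax (Set.Ico_subset_Icc_self hy)

lemma periodic_min {ω : ℝ} (hω : 0 < ω) {f : ℝ → ℝ} (hf : Continuous f)
    (hper : Function.Periodic f ω) : ∃ z : ℝ, ∀ t, f z ≤ f t := by
  obtain ⟨z, hz⟩ := periodic_max hω hf.neg (fun t => by simp [hper t])
  exact ⟨z, fun t => by have := hz t; simpa using this⟩

lemma trap_lemma {u u' : ℝ → ℝ} (hu : ∀ t, HasDerivAt u (u' t) t)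
    {ε κ : ℝ} (hκ : 0 < κ) (hd : ∀ t, ε ≤ u t → u' t ≤ -κ) :
    ∀ᶠ t in atTop, u t ≤ ε := by
  have hdiff : Differentiable ℝ u := fun t => (hu t).differentiableAt
  have hucont : Continuous u := hdiff.continuous
  -- key decrease estimate
  have key : ∀ p q : ℝ, p ≤ q → (∀ x ∈ Set.Ioo p q, ε ≤ u x) →
      u q + κ * q ≤ u p + κ * p := by
    intro p q hpq hge
    have hw : ∀ t, HasDerivAt (fun s => u s + κ * s) (u' t + κ) t := fun t =>
      (hu t).add ((hasDerivAt_id t).const_mul κ |>.congr_deriv (by ring))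
    have hanti : AntitoneOn (fun s => u s + κ * s) (Set.Icc p q) := by
      apply antitoneOn_of_deriv_nonpos (convex_Icc p q)
        (Continuous.continuousOn (by continuity))
      · intro x _; exact ((hw x).differentiableAt).differentiableWithinAt
      · intro x hx
        rw [interior_Icc] at hx
        rw [(hw x).deriv]
        have := hd x (hge x hx)
        linarith
    exact hanti ⟨le_refl p, hpq⟩ ⟨hpq, le_refl q⟩ hpq
  -- step A: some point where u ≤ ε
  have stepA : ∃ t₀ : ℝ, u t₀ ≤ ε := by
    by_contra hcon
    push_neg at hcon
    have hq : (u 0 - ε) / κ + 1 = (u 0 - ε) / κ + 1 := rfl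
    generalize hqdef : (u 0 - ε) / κ + 1 = q
    have h0 : ε < u 0 := hcon 0
    have hdn : 0 ≤ (u 0 - ε) / κ := div_nonneg (by linarith) hκ.le
    have hq0 : 0 ≤ q := by rw [← hqdef]; linarith
    have hk := key 0 q hq0 (fun x _ => (hcon x).le)
    have hval : u q ≤ u 0 - κ * q := by linarith
    have heq : κ * q = (u 0 - ε) + κ := by
      rw [← hqdef]; field_simp
    have h2 : u q ≤ ε - κ := by rw [heq] at hval; linarith
    have := hcon q
    linarith
  obtain ⟨t₀, ht₀⟩ := stepA
  filter_upwards [eventually_ge_atTop t₀] with t ht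
  by_contra hlt
  push_neg at hlt
  -- t ≠ t₀
  set S := {x ∈ Set.Icc t₀ t | u x ≤ ε} with hS
  have hSne : S.Nonempty := ⟨t₀, ⟨le_refl _, ht⟩, ht₀⟩
  have hSbdd : BddAbove S := ⟨t, fun x hx => hx.1.2⟩
  have hSclosed : IsClosed S := by
    have : S = Set.Icc t₀ t ∩ {x | u x ≤ ε} := rfl
    rw [this]
    exact isClosed_Icc.inter (isClosed_le hucont continuous_const)
  have hs_mem : sSup S ∈ S := hSclosed.csSup_mem hSne hSbdd
  set s := sSup S with hsdef
  have hst : s ≤ t := hs_mem.1.2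
  have hslt : s < t := lt_of_le_of_ne hst (by
    intro hst'
    rw [hst'] at hs_mem
    exact absurd hs_mem.2 (not_le.2 hlt))
  have hmid : ∀ x ∈ Set.Ioo s t, ε ≤ u x := by
    intro x hx
    by_contra hxle
    push_neg at hxle
    have hxS : x ∈ S := ⟨⟨le_trans hs_mem.1.1 hx.1.le, hx.2.le⟩, hxle.le⟩
    exact absurd (le_csSup hSbdd hxS) (not_le.2 hx.1)
  have hk := key s t hst hmid
  have : u t ≤ u s + κ * (s - t) := by linarith
  have : u t ≤ ε + κ * (s - t) := by
    have := hs_mem.2; linarith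
  nlinarith [hκ, hslt]

lemma periodic_integral_bound {ω : ℝ} (hω : 0 < ω) {Ψ : ℝ → ℝ} (hΨ : Continuous Ψ)
    (hper : Function.Periodic Ψ ω) (hint : (∫ x in (0:ℝ)..ω, Ψ x) ≤ 0)
    {M : ℝ} (hM0 : 0 ≤ M) (hM : ∀ t, Ψ t ≤ M) :
    ∀ s t : ℝ, s ≤ t → (∫ x in s..t, Ψ x) ≤ ω * M := by
  intro s t hst
  have hii : ∀ t₁ t₂ : ℝ, IntervalIntegrable Ψ MeasureTheory.volume t₁ t₂ :=
    fun t₁ t₂ => hΨ.intervalIntegrable t₁ t₂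
  set n : ℤ := ⌊(t - s) / ω⌋ with hn
  have hn0 : 0 ≤ n := Int.floor_nonneg.2 (div_nonneg (by linarith) hω.le)
  have hfl : (n : ℝ) ≤ (t - s) / ω := Int.floor_le _
  have hfl2 : (t - s) / ω < n + 1 := Int.lt_floor_add_one _
  have hm1 : s + n * ω ≤ t := by
    have := (mul_le_mul_iff_left₀ hω).2 hfl
    rw [div_mul_cancel₀ _ hω.ne'] at this
    linarith
  have hm2 : t - (s + n * ω) ≤ ω := by
    have := (mul_lt_mul_iff_left₀ hω).2 hfl2
    rw [div_mul_cancel₀ _ hω.ne'] at this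
    nlinarith
  have hsplit : (∫ x in s..t, Ψ x) =
      (∫ x in s..(s + n * ω), Ψ x) + ∫ x in (s + n * ω)..t, Ψ x :=
    (intervalIntegral.integral_add_adjacent_intervals (hii _ _) (hii _ _)).symm
  have hfirst : (∫ x in s..(s + n * ω), Ψ x) ≤ 0 := by
    have h1 : (∫ x in s..(s + n • ω), Ψ x) = n • ∫ x in s..(s + ω), Ψ x :=
      hper.intervalIntegral_add_zsmul_eq n s hii
    have h2 : (∫ x in s..(s + ω), Ψ x) = ∫ x in (0:ℝ)..(0 + ω), Ψ x :=
      hper.intervalIntegral_add_eq s 0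
    rw [zsmul_eq_mul] at h1
    simp only [zsmul_eq_mul] at h1
    rw [h1, h2, zero_add]
    have : (0:ℝ) ≤ n := by exact_mod_cast hn0
    exact mul_nonpos_of_nonneg_of_nonpos this hint
  have hsecond : (∫ x in (s + n * ω)..t, Ψ x) ≤ (t - (s + n * ω)) * M := by
    have := intervalIntegral.integral_mono_on hm1 (hii _ _)
      (intervalIntegrable_const) (fun x _ => hM x)
    simpa using this
  have : (t - (s + n * ω)) * M ≤ ω * M := by nlinarith
  linarith

set_option maxHeartbeats 2000000 in
lemma extinction_aux
    (ω : ℝ) (hω : 0 < ω)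
    (a b c α β γ ρ R : ℝ → ℝ)
    (ha : Continuous a) (hb : Continuous b) (hc : Continuous c)
    (hα : Continuous α) (hβ : Continuous β) (hγ : Continuous γ)
    (hρ : Continuous ρ) (hR : Continuous R)
    (hbpos : ∀ t, 0 < b t) (hcpos : ∀ t, 0 < c t)
    (hαpos : ∀ t, 0 < α t) (hβpos : ∀ t, 0 < β t) (hγpos : ∀ t, 0 < γ t)
    (hρpos : ∀ t, 0 < ρ t)
    (haper : ∀ t, a (t + ω) = a t) (hbper : ∀ t, b (t + ω) = b t)
    (hαper : ∀ t, α (t + ω) = α t)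
    (hβper : ∀ t, β (t + ω) = β t) (hγper : ∀ t, γ (t + ω) = γ t)
    (hρper : ∀ t, ρ (t + ω) = ρ t) (hRper : ∀ t, R (t + ω) = R t)
    (vstar : ℝ → ℝ)
    (hvstar_pos : ∀ t, 0 < vstar t)
    (hvstar_per : ∀ t, vstar (t + ω) = vstar t)
    (hvstar_sol : ∀ t, HasDerivAt vstar (vstar t * (a t - b t * vstar t)) t)
    (hvstar_dom : ∀ t, ρ t < vstar t)
    (havg : (1 / ω) * (∫ t in (0:ℝ)..ω,
      (-R t + α t * (vstar t - ρ t) / (β t + vstar t)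
        - γ t * β t / (vstar t - ρ t))) ≤ 0)
    (v h : ℝ → ℝ) (sol : OwenSmithSolution a b c α β γ ρ R v h) :
    Tendsto h atTop (nhds 0) := by
  obtain ⟨hv', hh', hρv, hhpos⟩ := sol
  -- continuity of v, h, vstar
  have hvcont : Continuous v := continuous_iff_continuousAt.2 fun t => ((hv' t).differentiableAt).continuousAt
  have hhcont : Continuous h := continuous_iff_continuousAt.2 fun t => ((hh' t).differentiableAt).continuousAt
  have hvscont : Continuous vstar := continuous_iff_continuousAt.2 fun t => ((hvstar_sol t).differentiableAt).continuousAt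
  -- positivity facts
  have hvpos : ∀ t, 0 < v t := fun t => (hρpos t).trans (hρv t)
  have hβv : ∀ t, 0 < β t + v t := fun t => add_pos (hβpos t) (hvpos t)
  have hvρ : ∀ t, 0 < v t - ρ t := fun t => sub_pos.2 (hρv t)
  have hβvs : ∀ t, 0 < β t + vstar t := fun t => add_pos (hβpos t) (hvstar_pos t)
  have hvsρ : ∀ t, 0 < vstar t - ρ t := fun t => sub_pos.2 (hvstar_dom t)
  -- constants
  obtain ⟨zb, hzb⟩ := periodic_min hω hb hbper
  set b₀ := b zb with hb₀def
  have hb₀ : 0 < b₀ := hbpos zb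
  obtain ⟨zv, hzv⟩ := periodic_min hω hvscont hvstar_per
  set v₀ := vstar zv with hv₀def
  have hv₀ : 0 < v₀ := hvstar_pos zv
  -- m₁ : min of γ v*/(v*-ρ)
  have hqcont : Continuous (fun t => γ t * vstar t / (vstar t - ρ t)) := by
    apply Continuous.div (hγ.mul hvscont) (hvscont.sub hρ)
    exact fun t => (hvsρ t).ne'
  obtain ⟨zq, hzq⟩ := periodic_min hω hqcont
    (fun t => by simp only [hγper t, hvstar_per t, hρper t])
  set m₁ := γ zq * vstar zq / (vstar zq - ρ zq) with hm₁def
  have hm₁ : 0 < m₁ := div_pos (mul_pos (hγpos zq) (hvstar_pos zq)) (hvsρ zq)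
  -- K : max of Q
  have hQcont : Continuous (fun t => (β t + ρ t) * vstar t *
      (α t / (β t + vstar t) ^ 2 + γ t / (vstar t - ρ t) ^ 2)) := by
    apply Continuous.mul ((hβ.add hρ).mul hvscont)
    apply Continuous.add
    · exact hα.div ((hβ.add hvscont).pow 2) (fun t => pow_ne_zero 2 (hβvs t).ne')
    · exact hγ.div ((hvscont.sub hρ).pow 2) (fun t => pow_ne_zero 2 (hvsρ t).ne')
  obtain ⟨zQ, hzQ⟩ := periodic_max hω hQcont
    (fun t => by simp only [hβper t, hρper t, hvstar_per t, hγper t, hαper t])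
  set K := (β zQ + ρ zQ) * vstar zQ *
      (α zQ / (β zQ + vstar zQ) ^ 2 + γ zQ / (vstar zQ - ρ zQ) ^ 2) with hKdef
  have hK : 0 < K := by
    apply mul_pos (mul_pos (add_pos (hβpos zQ) (hρpos zQ)) (hvstar_pos zQ))
    have h1 : 0 < α zQ / (β zQ + vstar zQ) ^ 2 := div_pos (hαpos zQ) (pow_pos (hβvs zQ) 2)
    have h2 : 0 < γ zQ / (vstar zQ - ρ zQ) ^ 2 := div_pos (hγpos zQ) (pow_pos (hvsρ zQ) 2)
    linarith
  -- Φ : per-capita rate along vstar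
  set Φ := fun t => α t * (vstar t - ρ t) / (β t + vstar t) - R t
      - γ t * (β t + vstar t) / (vstar t - ρ t) with hΦdef
  have hΦcont : Continuous Φ := by
    apply Continuous.sub
    apply Continuous.sub
    · exact ((hα.mul (hvscont.sub hρ)).div (hβ.add hvscont) (fun t => (hβvs t).ne'))
    · exact hR
    · exact (hγ.mul (hβ.add hvscont)).div (hvscont.sub hρ) (fun t => (hvsρ t).ne')
  have hΦper : Function.Periodic Φ ω := fun t => by
    simp only [hΦdef, hαper t, hvstar_per t, hρper t, hβper t, hRper t, hγper t]
  -- the integrand in havg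
  set f0 := fun t => -R t + α t * (vstar t - ρ t) / (β t + vstar t)
      - γ t * β t / (vstar t - ρ t) with hf0def
  have hf0cont : Continuous f0 := by
    apply Continuous.sub
    apply Continuous.add
    · exact hR.neg
    · exact ((hα.mul (hvscont.sub hρ)).div (hβ.add hvscont) (fun t => (hβvs t).ne'))
    · exact (hγ.mul hβ).div (hvscont.sub hρ) (fun t => (hvsρ t).ne')
  have hI0 : (∫ t in (0:ℝ)..ω, f0 t) ≤ 0 := by
    have h1 := mul_le_mul_of_nonneg_left havg hω.le
    rw [mul_zero, ← mul_assoc, mul_one_div_cancel hω.ne', one_mul] at h1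
    exact h1
  have hΦle : ∀ t, Φ t ≤ f0 t - m₁ := by
    intro t
    have hid : Φ t = f0 t - γ t * vstar t / (vstar t - ρ t) := by
      have hb1 : (β t + vstar t) ≠ 0 := (hβvs t).ne'
      have hb2 : (vstar t - ρ t) ≠ 0 := (hvsρ t).ne'
      simp only [hΦdef, hf0def]
      field_simp
      ring
    rw [hid]
    have := hzq t
    linarith
  have hIΦ : (∫ t in (0:ℝ)..ω, Φ t) ≤ -(m₁ * ω) := by
    have hmono : (∫ t in (0:ℝ)..ω, Φ t) ≤ ∫ t in (0:ℝ)..ω, (f0 t - m₁) := by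
      apply intervalIntegral.integral_mono_on hω.le
        (hΦcont.intervalIntegrable _ _) ((hf0cont.sub continuous_const).intervalIntegrable _ _)
      exact fun x _ => hΦle x
    have heq : (∫ t in (0:ℝ)..ω, (f0 t - m₁)) = (∫ t in (0:ℝ)..ω, f0 t) - m₁ * ω := by
      rw [intervalIntegral.integral_sub (hf0cont.intervalIntegrable _ _)
        (intervalIntegrable_const)]
      simp only [intervalIntegral.integral_const, smul_eq_mul, sub_zero]
      ring
    rw [heq] at hmono
    linarith
  -- Ψ := Φ + m₁ has nonpositive period integral
  set Ψ := fun t => Φ t + m₁ with hΨdef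
  have hΨcont : Continuous Ψ := hΦcont.add continuous_const
  have hΨper : Function.Periodic Ψ ω := fun t => by simp only [hΨdef, hΦper t]
  have hIΨ : (∫ t in (0:ℝ)..ω, Ψ t) ≤ 0 := by
    have : (∫ t in (0:ℝ)..ω, Ψ t) = (∫ t in (0:ℝ)..ω, Φ t) + m₁ * ω := by
      simp only [hΨdef]
      rw [intervalIntegral.integral_add (hΦcont.intervalIntegrable _ _)
        (intervalIntegrable_const)]
      simp only [intervalIntegral.integral_const, smul_eq_mul, sub_zero]
      ring
    rw [this]
    linarith
  -- bound for Ψ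
  obtain ⟨zM, hzM⟩ := periodic_max hω hΨcont hΨper
  set M := max (Ψ zM) 0 with hMdef
  have hM0 : 0 ≤ M := le_max_right _ _
  have hMb : ∀ t, Ψ t ≤ M := fun t => (hzM t).trans (le_max_left _ _)
  -- choice of ε
  set ε := Real.log (1 + m₁ / (2 * K)) with hεdef
  have harg : (0:ℝ) < 1 + m₁ / (2 * K) := by
    have : 0 < m₁ / (2 * K) := div_pos hm₁ (by linarith)
    linarith
  have hεpos : 0 < ε := Real.log_pos (by
    have : 0 < m₁ / (2 * K) := div_pos hm₁ (by linarith)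
    linarith)
  have hEe : Real.exp ε - 1 = m₁ / (2 * K) := by
    rw [hεdef, Real.exp_log harg]; ring
  -- the comparison function u = log v - log v*
  set u := fun t => Real.log (v t) - Real.log (vstar t) with hudef
  set u' := fun t => (v t * (a t - b t * v t) - c t * ((v t - ρ t) / (β t + v t)) * h t) / v t
      - vstar t * (a t - b t * vstar t) / vstar t with hu'def
  have hu : ∀ t, HasDerivAt u (u' t) t := fun t =>
    ((hv' t).log (hvpos t).ne').sub ((hvstar_sol t).log (hvstar_pos t).ne')
  set κ := b₀ * (v₀ * (m₁ / (2 * K))) with hκdef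
  have hκpos : 0 < κ := by
    have : 0 < m₁ / (2 * K) := div_pos hm₁ (by linarith)
    have := mul_pos hv₀ this
    exact mul_pos hb₀ this
  have hcond : ∀ t, ε ≤ u t → u' t ≤ -κ := by
    intro t hεu
    have hne1 : v t ≠ 0 := (hvpos t).ne'
    have hne2 : vstar t ≠ 0 := (hvstar_pos t).ne'
    have hne3 : β t + v t ≠ 0 := (hβv t).ne'
    have hvge : vstar t * Real.exp ε ≤ v t := by
      have h1 : Real.log (vstar t) + ε ≤ Real.log (v t) := by
        simp only [hudef] at hεu; linarith
      calc vstar t * Real.exp ε = Real.exp (Real.log (vstar t) + ε) := by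
            rw [Real.exp_add, Real.exp_log (hvstar_pos t)]
        _ ≤ Real.exp (Real.log (v t)) := Real.exp_le_exp.2 h1
        _ = v t := Real.exp_log (hvpos t)
    have hgap : v₀ * (m₁ / (2 * K)) ≤ v t - vstar t := by
      have h1 : vstar t * (Real.exp ε - 1) ≤ v t - vstar t := by nlinarith
      rw [hEe] at h1
      have h2 : v₀ * (m₁ / (2 * K)) ≤ vstar t * (m₁ / (2 * K)) :=
        mul_le_mul_of_nonneg_right (hzv t) (div_pos hm₁ (by linarith)).le
      linarith
    have hident : u' t = -(b t * (v t - vstar t))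
        - c t * ((v t - ρ t) / (β t + v t)) * h t / v t := by
      simp only [hu'def]
      field_simp
      ring
    have hterm : 0 ≤ c t * ((v t - ρ t) / (β t + v t)) * h t / v t :=
      div_nonneg (mul_nonneg (mul_nonneg (hcpos t).le
        (div_nonneg (hvρ t).le (hβv t).le)) (hhpos t).le) (hvpos t).le
    have hbb : κ ≤ b t * (v t - vstar t) := by
      rw [hκdef]
      exact mul_le_mul (hzb t) hgap
        (mul_nonneg hv₀.le (div_pos hm₁ (by linarith)).le) (hbpos t).le
    rw [hident]
    linarith
  have htrap := trap_lemma hu hκpos hcond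
  obtain ⟨T, hT⟩ := eventually_atTop.1 htrap
  have hvbound : ∀ t, T ≤ t → v t ≤ vstar t * Real.exp ε := by
    intro t ht
    have h1 : Real.log (v t) ≤ Real.log (vstar t) + ε := by
      have := hT t ht; simp only [hudef] at this; linarith
    calc v t = Real.exp (Real.log (v t)) := (Real.exp_log (hvpos t)).symm
      _ ≤ Real.exp (Real.log (vstar t) + ε) := Real.exp_le_exp.2 h1
      _ = vstar t * Real.exp ε := by rw [Real.exp_add, Real.exp_log (hvstar_pos t)]
  -- G : per-capita rate of h
  set G := fun t => α t * (v t - ρ t) / (β t + v t) - R t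
      - γ t * (β t + v t) / (v t - ρ t) with hGdef
  have hGcont : Continuous G := by
    apply Continuous.sub
    apply Continuous.sub
    · exact ((hα.mul (hvcont.sub hρ)).div (hβ.add hvcont) (fun t => (hβv t).ne'))
    · exact hR
    · exact (hγ.mul (hβ.add hvcont)).div (hvcont.sub hρ) (fun t => (hvρ t).ne')
  have hlogh : ∀ t, HasDerivAt (fun s => Real.log (h s)) (G t) t := by
    intro t
    have h1 := (hh' t).log (hhpos t).ne'
    have h2 : h t * G t / h t = G t := mul_div_cancel_left₀ _ (hhpos t).ne'
    rw [← h2]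
    exact h1
  have hGle : ∀ t, v t ≤ vstar t * Real.exp ε → G t ≤ Ψ t - m₁ / 2 := by
    intro t hvle
    have hne1 : β t + v t ≠ 0 := (hβv t).ne'
    have hne2 : v t - ρ t ≠ 0 := (hvρ t).ne'
    have hne3 : β t + vstar t ≠ 0 := (hβvs t).ne'
    have hne4 : vstar t - ρ t ≠ 0 := (hvsρ t).ne'
    have hident2 : G t - Φ t = (β t + ρ t) * (v t - vstar t) *
        (α t / ((β t + v t) * (β t + vstar t))
          + γ t / ((v t - ρ t) * (vstar t - ρ t))) := by
      simp only [hGdef, hΦdef]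
      field_simp
      ring
    have hB0 : 0 ≤ α t / ((β t + v t) * (β t + vstar t))
        + γ t / ((v t - ρ t) * (vstar t - ρ t)) :=
      add_nonneg (div_nonneg (hαpos t).le (mul_nonneg (hβv t).le (hβvs t).le))
        (div_nonneg (hγpos t).le (mul_nonneg (hvρ t).le (hvsρ t).le))
    rcases le_or_gt (v t) (vstar t) with hcase | hcase
    · have h1 : (β t + ρ t) * (v t - vstar t) ≤ 0 :=
        mul_nonpos_iff.2 (Or.inl ⟨(add_pos (hβpos t) (hρpos t)).le, sub_nonpos.2 hcase⟩)
      have h2 : G t - Φ t ≤ 0 := by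
        rw [hident2]
        exact mul_nonpos_iff.2 (Or.inr ⟨h1, hB0⟩)
      have h3 : Ψ t = Φ t + m₁ := rfl
      have hm₁' : (0:ℝ) < m₁ := hm₁
      calc G t ≤ Φ t := by linarith
        _ ≤ Φ t + m₁ / 2 := by linarith
        _ = Ψ t - m₁ / 2 := by rw [h3]; ring
    · -- vstar t < v t ≤ vstar t * exp ε
      have hb1 : β t + vstar t ≤ β t + v t := by linarith
      have hb2 : vstar t - ρ t ≤ v t - ρ t := by linarith
      have hbr1 : α t / ((β t + v t) * (β t + vstar t)) ≤ α t / (β t + vstar t) ^ 2 := by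
        rw [sq]
        apply div_le_div_of_nonneg_left (hαpos t).le
          (mul_pos (hβvs t) (hβvs t))
          (mul_le_mul_of_nonneg_right hb1 (hβvs t).le)
      have hbr2 : γ t / ((v t - ρ t) * (vstar t - ρ t)) ≤ γ t / (vstar t - ρ t) ^ 2 := by
        rw [sq]
        apply div_le_div_of_nonneg_left (hγpos t).le
          (mul_pos (hvsρ t) (hvsρ t))
          (mul_le_mul_of_nonneg_right hb2 (hvsρ t).le)
      have hvv : v t - vstar t ≤ vstar t * (m₁ / (2 * K)) := by
        have h1 : v t - vstar t ≤ vstar t * (Real.exp ε - 1) := by nlinarith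
        rw [hEe] at h1
        exact h1
      have hB' : α t / ((β t + v t) * (β t + vstar t))
          + γ t / ((v t - ρ t) * (vstar t - ρ t))
          ≤ α t / (β t + vstar t) ^ 2 + γ t / (vstar t - ρ t) ^ 2 :=
        add_le_add hbr1 hbr2
      have hB'0 : 0 ≤ α t / (β t + vstar t) ^ 2 + γ t / (vstar t - ρ t) ^ 2 :=
        add_nonneg (div_nonneg (hαpos t).le (sq_nonneg _))
          (div_nonneg (hγpos t).le (sq_nonneg _))
      have hβρ0 : 0 ≤ β t + ρ t := (add_pos (hβpos t) (hρpos t)).le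
      have hfac : 0 ≤ vstar t * (m₁ / (2 * K)) :=
        mul_nonneg (hvstar_pos t).le (div_pos hm₁ (by linarith)).le
      have hstep : (β t + ρ t) * (v t - vstar t) *
          (α t / ((β t + v t) * (β t + vstar t))
            + γ t / ((v t - ρ t) * (vstar t - ρ t)))
          ≤ (β t + ρ t) * (vstar t * (m₁ / (2 * K))) *
          (α t / (β t + vstar t) ^ 2 + γ t / (vstar t - ρ t) ^ 2) := by
        apply mul_le_mul
        · exact mul_le_mul_of_nonneg_left hvv hβρ0
        · exact hB'
        · exact hB0
        · exact mul_nonneg hβρ0 hfac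
      have hQt : (β t + ρ t) * vstar t *
          (α t / (β t + vstar t) ^ 2 + γ t / (vstar t - ρ t) ^ 2) ≤ K := hzQ t
      have hstep2 : (β t + ρ t) * (vstar t * (m₁ / (2 * K))) *
          (α t / (β t + vstar t) ^ 2 + γ t / (vstar t - ρ t) ^ 2)
          ≤ (m₁ / (2 * K)) * K := by
        have heq : (β t + ρ t) * (vstar t * (m₁ / (2 * K))) *
            (α t / (β t + vstar t) ^ 2 + γ t / (vstar t - ρ t) ^ 2)
            = (m₁ / (2 * K)) * ((β t + ρ t) * vstar t *
              (α t / (β t + vstar t) ^ 2 + γ t / (vstar t - ρ t) ^ 2)) := by ring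
        rw [heq]
        exact mul_le_mul_of_nonneg_left hQt (div_pos hm₁ (by linarith)).le
      have hhalf : (m₁ / (2 * K)) * K = m₁ / 2 := by
        field_simp
      have h3 : Ψ t = Φ t + m₁ := rfl
      have hGΦ : G t - Φ t ≤ m₁ / 2 := by
        rw [hident2]
        calc (β t + ρ t) * (v t - vstar t) *
            (α t / ((β t + v t) * (β t + vstar t))
              + γ t / ((v t - ρ t) * (vstar t - ρ t)))
            ≤ (β t + ρ t) * (vstar t * (m₁ / (2 * K))) *
            (α t / (β t + vstar t) ^ 2 + γ t / (vstar t - ρ t) ^ 2) := hstep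
          _ ≤ (m₁ / (2 * K)) * K := hstep2
          _ = m₁ / 2 := hhalf
      calc G t ≤ Φ t + m₁ / 2 := by linarith
        _ = Ψ t - m₁ / 2 := by rw [h3]; ring
  -- integral comparison and conclusion
  have hftc : ∀ t, T ≤ t → Real.log (h t) - Real.log (h T) = ∫ x in T..t, G x := by
    intro t ht
    exact (intervalIntegral.integral_eq_sub_of_hasDerivAt
      (fun x _ => hlogh x) (hGcont.intervalIntegrable _ _)).symm
  have hbound : ∀ t, T ≤ t →
      Real.log (h t) ≤ Real.log (h T) + ω * M - m₁ / 2 * (t - T) := by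
    intro t ht
    have h1 := hftc t ht
    have hmono : (∫ x in T..t, G x) ≤ ∫ x in T..t, (Ψ x - m₁ / 2) := by
      apply intervalIntegral.integral_mono_on ht (hGcont.intervalIntegrable _ _)
        ((hΨcont.sub continuous_const).intervalIntegrable _ _)
      intro x hx
      exact hGle x (hvbound x hx.1)
    have heq2 : (∫ x in T..t, (Ψ x - m₁ / 2))
        = (∫ x in T..t, Ψ x) - m₁ / 2 * (t - T) := by
      rw [intervalIntegral.integral_sub (hΨcont.intervalIntegrable _ _)
        intervalIntegrable_const]
      simp only [intervalIntegral.integral_const, smul_eq_mul]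
      ring
    have hΨb := periodic_integral_bound hω hΨcont hΨper hIΨ hM0 hMb T t ht
    linarith
  have hgtend : Tendsto (fun t : ℝ =>
      Real.log (h T) + ω * M - m₁ / 2 * (t - T)) atTop atBot := by
    have h1 : Tendsto (fun t : ℝ => m₁ / 2 * (t - T)) atTop atTop := by
      apply Tendsto.const_mul_atTop (by linarith : (0:ℝ) < m₁ / 2)
      exact tendsto_atTop_add_const_right _ _ tendsto_id
    have h2 : Tendsto (fun t : ℝ => -(m₁ / 2 * (t - T))) atTop atBot :=
      tendsto_neg_atTop_atBot.comp h1
    have h3 := tendsto_atBot_add_const_left atTop (Real.log (h T) + ω * M) h2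
    exact h3.congr fun t => by ring
  have hlogtend : Tendsto (fun t => Real.log (h t)) atTop atBot := by
    apply tendsto_atBot_mono' atTop ?_ hgtend
    filter_upwards [eventually_ge_atTop T] with t ht
    exact hbound t ht
  have hfinal := Real.tendsto_exp_atBot.comp hlogtend
  exact hfinal.congr fun t => Real.exp_log (hhpos t)

/-- If the averaged net growth condition fails, the herbivore goes extinct
and the system is not permanent. -/
theorem herbivore_extinction
    (ω : ℝ) (hω : 0 < ω)
    (a b c α β γ ρ R : ℝ → ℝ)
    (ha : Continuous a) (hb : Continuous b) (hc : Continuous c)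
    (hα : Continuous α) (hβ : Continuous β) (hγ : Continuous γ)
    (hρ : Continuous ρ) (hR : Continuous R)
    (hapos : ∀ t, 0 < a t) (hbpos : ∀ t, 0 < b t) (hcpos : ∀ t, 0 < c t)
    (hαpos : ∀ t, 0 < α t) (hβpos : ∀ t, 0 < β t) (hγpos : ∀ t, 0 < γ t)
    (hρpos : ∀ t, 0 < ρ t) (hRpos : ∀ t, 0 < R t)
    (haper : ∀ t, a (t + ω) = a t) (hbper : ∀ t, b (t + ω) = b t)
    (hcper : ∀ t, c (t + ω) = c t) (hαper : ∀ t, α (t + ω) = α t)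
    (hβper : ∀ t, β (t + ω) = β t) (hγper : ∀ t, γ (t + ω) = γ t)
    (hρper : ∀ t, ρ (t + ω) = ρ t) (hRper : ∀ t, R (t + ω) = R t)
    (vstar : ℝ → ℝ)
    (hvstar_pos : ∀ t, 0 < vstar t)
    (hvstar_per : ∀ t, vstar (t + ω) = vstar t)
    (hvstar_sol : ∀ t, HasDerivAt vstar (vstar t * (a t - b t * vstar t)) t)
    (hvstar_dom : ∀ t, ρ t < vstar t)
    (hex : ∃ v h : ℝ → ℝ, OwenSmithSolution a b c α β γ ρ R v h)
    (havg : (1 / ω) * (∫ t in (0:ℝ)..ω,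
      (-R t + α t * (vstar t - ρ t) / (β t + vstar t)
        - γ t * β t / (vstar t - ρ t))) ≤ 0) :
    (∀ v h : ℝ → ℝ, OwenSmithSolution a b c α β γ ρ R v h →
      Tendsto h atTop (nhds 0)) ∧
    ¬ OwenSmithPermanent a b c α β γ ρ R := by
  have ext : ∀ v h : ℝ → ℝ, OwenSmithSolution a b c α β γ ρ R v h →
      Tendsto h atTop (nhds 0) := fun v h sol =>
    extinction_aux ω hω a b c α β γ ρ R ha hb hc hα hβ hγ hρ hR
      hbpos hcpos hαpos hβpos hγpos hρpos
      haper hbper hαper hβper hγper hρper hRper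
      vstar hvstar_pos hvstar_per hvstar_sol hvstar_dom havg v h sol
  refine ⟨ext, ?_⟩
  rintro ⟨δ, Δ, hδ, hδΔ, hP⟩
  obtain ⟨v, h, hsol⟩ := hex
  have h0 := ext v h hsol
  have hlim := (hP v h hsol).2.1
  have hliminf : liminf h atTop = 0 := h0.liminf_eq
  rw [hliminf] at hlim
  linarith
end

section
/- Let a, b be continuous ω-periodic functions with b > 0 and A_ω(a) > 0, and for a parameter η ≥ 0 let v_η be the unique positive ω-periodic solution of v' = v(a(t) - (b(t) + η·c(t)/β(t))v), where c, β are continuous positive ω-periodic. Then v_η depends continuously on η: for every ε₀ > 0 there exists η₀ > 0 such that for all 0 < η < η₀ and all t ∈ ℝ, |v_η(t) - v_0(t)| < ε₀/2. -/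
open Real Filter MeasureTheory Set

private lemma primitive_hasDerivAt {f : ℝ → ℝ} (hf : Continuous f) (t : ℝ) :
    HasDerivAt (fun x => ∫ s in (0:ℝ)..x, f s) (f t) t :=
  intervalIntegral.integral_hasDerivAt_right (hf.intervalIntegrable _ _)
    (hf.stronglyMeasurableAtFilter _ _) hf.continuousAt

set_option maxHeartbeats 1000000 in
/-- Continuous dependence on the parameter η of the unique positive ω-periodic
solution of the perturbed logistic equation. -/
theorem periodic_solution_continuity_in_parameter
    (ω : ℝ) (hω : 0 < ω)
    (a b c β : ℝ → ℝ)
    (ha : Continuous a) (hb : Continuous b) (hc : Continuous c)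
    (hβ : Continuous β)
    (haper : ∀ t, a (t + ω) = a t) (hbper : ∀ t, b (t + ω) = b t)
    (hcper : ∀ t, c (t + ω) = c t) (hβper : ∀ t, β (t + ω) = β t)
    (hbpos : ∀ t, 0 < b t) (hcpos : ∀ t, 0 < c t) (hβpos : ∀ t, 0 < β t)
    (havg_a : 0 < (1 / ω) * ∫ t in (0:ℝ)..ω, a t)
    (vη : ℝ → ℝ → ℝ)
    (hsol : ∀ η : ℝ, 0 ≤ η →
      (∀ t, 0 < vη η t) ∧ (∀ t, vη η (t + ω) = vη η t) ∧
      (∀ t, HasDerivAt (vη η)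
        (vη η t * (a t - (b t + η * c t / β t) * vη η t)) t))
    (huniq : ∀ η : ℝ, 0 ≤ η → ∀ w : ℝ → ℝ,
      (∀ t, 0 < w t) → (∀ t, w (t + ω) = w t) →
      (∀ t, HasDerivAt w (w t * (a t - (b t + η * c t / β t) * w t)) t) →
      w = vη η) :
    ∀ ε₀ > (0:ℝ), ∃ η₀ > (0:ℝ), ∀ η : ℝ, 0 < η → η < η₀ →
      ∀ t : ℝ, |vη η t - vη 0 t| < ε₀ / 2 := by
  intro ε₀ hε₀
  obtain ⟨hv0pos, hv0per, hv0deriv⟩ := hsol 0 le_rfl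
  -- the function φ = c/β
  set φ : ℝ → ℝ := fun t => c t / β t with hφdef
  have hφ : Continuous φ := hc.div hβ fun t => (hβpos t).ne'
  have hφpos : ∀ t, 0 < φ t := fun t => div_pos (hcpos t) (hβpos t)
  -- primitive of a and its exponential
  set A : ℝ → ℝ := fun t => ∫ s in (0:ℝ)..t, a s with hAdef
  have hA : ∀ t, HasDerivAt A (a t) t := primitive_hasDerivAt ha
  have hAcont : Continuous A :=
    continuous_iff_continuousAt.mpr fun t => (hA t).continuousAt
  set E : ℝ → ℝ := fun t => Real.exp (A t) with hEdef
  have hEpos : ∀ t, 0 < E t := fun t => Real.exp_pos _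
  have hE : ∀ t, HasDerivAt E (Real.exp (A t) * a t) t := fun t => (hA t).exp
  have hEcont : Continuous E := Real.continuous_exp.comp hAcont
  have hA0 : A 0 = 0 := intervalIntegral.integral_same
  have hE0 : E 0 = 1 := by simp [hEdef, hA0]
  have hAω : 0 < A ω := by
    by_contra h
    push_neg at h
    have h1 : 0 < 1 / ω := by positivity
    nlinarith [havg_a]
  have hEω : 1 < E ω := by
    have := Real.exp_pos (A ω)
    calc (1:ℝ) = Real.exp 0 := by simp
    _ < Real.exp (A ω) := Real.exp_lt_exp.mpr hAω
  -- primitive I of E * φ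
  set I : ℝ → ℝ := fun t => ∫ s in (0:ℝ)..t, E s * φ s with hIdef
  have hI : ∀ t, HasDerivAt I (E t * φ t) t :=
    primitive_hasDerivAt (hEcont.mul hφ)
  have hIcont : Continuous I :=
    continuous_iff_continuousAt.mpr fun t => (hI t).continuousAt
  have hI0 : I 0 = 0 := intervalIntegral.integral_same
  have hInonneg : ∀ s ∈ Icc (0:ℝ) ω, 0 ≤ I s := by
    intro s hs
    exact intervalIntegral.integral_nonneg hs.1
      (fun x _ => le_of_lt (mul_pos (hEpos x) (hφpos x)))
  -- the constant K and the comparison function h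
  set K : ℝ := I ω / (E ω - 1) with hKdef
  have hKnonneg : 0 ≤ K :=
    div_nonneg (hInonneg ω ⟨le_refl _ |>.trans hω.le, le_refl _⟩) (by linarith)
  set h : ℝ → ℝ := fun t => (K + I t) / E t with hhdef
  have hhcont : Continuous h :=
    (continuous_const.add hIcont).div hEcont fun t => (hEpos t).ne'
  have hhnonneg : ∀ s ∈ Icc (0:ℝ) ω, 0 ≤ h s := fun s hs =>
    div_nonneg (by have := hInonneg s hs; linarith) (hEpos s).le
  -- maximum of h on [0, ω]
  obtain ⟨tM, htM, hMmax⟩ := isCompact_Icc.exists_isMaxOn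
    (Set.nonempty_Icc.mpr hω.le) hhcont.continuousOn
  set M : ℝ := h tM with hMdef
  have hMnonneg : 0 ≤ M := hhnonneg tM htM
  -- continuity and maximum of v0 on [0, ω]
  have hv0cont : Continuous (vη 0) :=
    continuous_iff_continuousAt.mpr fun t => (hv0deriv t).continuousAt
  obtain ⟨tV, htV, hVmax⟩ := isCompact_Icc.exists_isMaxOn
    (Set.nonempty_Icc.mpr hω.le) hv0cont.continuousOn
  set V : ℝ := vη 0 tV with hVdef
  have hVpos : 0 < V := hv0pos tV
  have hv0perP : Function.Periodic (vη 0) ω := hv0per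
  have hv0le : ∀ t, vη 0 t ≤ V := by
    intro t
    obtain ⟨y, hy, hxy⟩ := hv0perP.exists_mem_Ico₀ hω t
    rw [hxy]
    exact hVmax (Ico_subset_Icc_self hy)
  -- choice of η₀
  refine ⟨ε₀ / (2 * (M * V ^ 2 + 1)), by positivity, ?_⟩
  intro η hη hηlt t
  obtain ⟨hvpos, hvper, hvderiv⟩ := hsol η hη.le
  -- the reciprocals u, u0 and their difference w
  set u : ℝ → ℝ := fun s => (vη η s)⁻¹ with hudef
  set u0 : ℝ → ℝ := fun s => (vη 0 s)⁻¹ with hu0def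
  set w : ℝ → ℝ := fun s => u s - u0 s with hwdef
  have hu : ∀ s, HasDerivAt u (-(a s) * u s + (b s + η * c s / β s)) s := by
    intro s
    have := (hvderiv s).inv (hvpos s).ne'
    refine this.congr_deriv ?_
    rw [hudef]
    field_simp [hudef, (hvpos s).ne']
    ring
  have hu0 : ∀ s, HasDerivAt u0 (-(a s) * u0 s + b s) s := by
    intro s
    have := (hv0deriv s).inv (hv0pos s).ne'
    refine this.congr_deriv ?_
    rw [hu0def]
    field_simp [hu0def, (hv0pos s).ne']
    ring
  have hwD : ∀ s, HasDerivAt w (-(a s) * w s + η * φ s) s := by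
    intro s
    have := (hu s).sub (hu0 s)
    refine this.congr_deriv ?_
    simp only [hwdef, hφdef]
    field_simp
    ring
  -- the function g is constant
  set g : ℝ → ℝ := fun s => E s * w s - η * I s with hgdef
  have hg : ∀ s, HasDerivAt g 0 s := by
    intro s
    have := ((hE s).mul (hwD s)).sub ((hI s).const_mul η)
    refine this.congr_deriv ?_
    simp only [hEdef]
    ring
  have hgconst : ∀ s, g s = g 0 := fun s =>
    is_const_of_deriv_eq_zero (fun x => (hg x).differentiableAt)
      (fun x => (hg x).deriv) s 0
  have hg0 : g 0 = w 0 := by simp [hgdef, hE0, hI0]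
  -- value of w 0
  have hwper : ∀ s, w (s + ω) = w s := by
    intro s
    simp [hwdef, hudef, hu0def, hvper s, hv0per s]
  have hwω : w ω = w 0 := by
    have := hwper 0
    simpa using this
  have hw0 : w 0 = η * K := by
    have h1 : g ω = g 0 := hgconst ω
    rw [hg0] at h1
    simp only [hgdef] at h1
    rw [hwω] at h1
    have h2 : w 0 * (E ω - 1) = η * I ω := by linarith
    have h3 : E ω - 1 ≠ 0 := by linarith
    rw [hKdef]
    field_simp
    linarith [h2]
  -- explicit formula for w
  have hwh : ∀ s, w s = η * h s := by
    intro s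
    have h1 : g s = g 0 := hgconst s
    rw [hg0, hw0] at h1
    simp only [hgdef] at h1
    have h2 : E s * w s = η * K + η * I s := by linarith
    have h3 : E s ≠ 0 := (hEpos s).ne'
    simp only [hhdef]
    field_simp
    linarith [h2]
  -- bounds for w
  have hwbound : ∀ s, 0 ≤ w s ∧ w s ≤ η * M := by
    intro s
    have hper : Function.Periodic w ω := hwper
    obtain ⟨y, hy, hxy⟩ := hper.exists_mem_Ico₀ hω s
    have hyIcc : y ∈ Icc (0:ℝ) ω := Ico_subset_Icc_self hy
    constructor
    · rw [hxy, hwh y]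
      exact mul_nonneg hη.le (hhnonneg y hyIcc)
    · rw [hxy, hwh y]
      exact mul_le_mul_of_nonneg_left (hMmax hyIcc) hη.le
  obtain ⟨hwnn, hwle⟩ := hwbound t
  -- comparison: vη η t ≤ vη 0 t
  have hule : u0 t ≤ u t := by simp only [hwdef] at hwnn; linarith
  have hvle : vη η t ≤ vη 0 t := by
    have h1 := hvpos t
    have h2 := hv0pos t
    have h3 : (vη 0 t)⁻¹ ≤ (vη η t)⁻¹ := hule
    nlinarith [mul_pos h1 h2, inv_pos.mpr h1, inv_pos.mpr h2,
      mul_inv_cancel₀ h1.ne', mul_inv_cancel₀ h2.ne',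
      mul_le_mul_of_nonneg_left h3 (mul_pos h1 h2).le]
  -- the key identity
  have hkey : vη 0 t - vη η t = w t * vη η t * vη 0 t := by
    have h1 := (hvpos t).ne'
    have h2 := (hv0pos t).ne'
    simp only [hwdef, hudef, hu0def]
    field_simp
  -- final estimate
  have habs : |vη η t - vη 0 t| = w t * vη η t * vη 0 t := by
    rw [abs_sub_comm, abs_of_nonneg (by linarith), hkey]
  rw [habs]
  have hb1 : w t * vη η t * vη 0 t ≤ η * M * V ^ 2 := by
    have h1 := hvpos t
    have h2 := hv0pos t
    have h3 := hv0le t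
    have h4 : vη η t ≤ V := le_trans hvle h3
    have s1 : w t * vη η t ≤ (η * M) * V :=
      mul_le_mul hwle h4 h1.le (mul_nonneg hη.le hMnonneg)
    have s2 : w t * vη η t * vη 0 t ≤ ((η * M) * V) * V :=
      mul_le_mul s1 h3 h2.le
        (mul_nonneg (mul_nonneg hη.le hMnonneg) hVpos.le)
    calc w t * vη η t * vη 0 t ≤ ((η * M) * V) * V := s2
    _ = η * M * V ^ 2 := by ring
  have hb2 : η * M * V ^ 2 < ε₀ / 2 := by
    have h5 : η * (M * V ^ 2 + 1) < (ε₀ / (2 * (M * V ^ 2 + 1))) * (M * V ^ 2 + 1) := by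
      apply mul_lt_mul_of_pos_right hηlt
      nlinarith [sq_nonneg V, hMnonneg]
    have h6 : (ε₀ / (2 * (M * V ^ 2 + 1))) * (M * V ^ 2 + 1) = ε₀ / 2 := by
      have : M * V ^ 2 + 1 ≠ 0 := by nlinarith [sq_nonneg V]
      field_simp
    have h7 : η * M * V ^ 2 < η * (M * V ^ 2 + 1) := by nlinarith [hη]
    linarith
  exact lt_of_le_of_lt hb1 hb2
end
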